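/- Let (Ω, μ) be a probability space and F a real random variable such that ‖F‖_{L^q(μ)} ≤ C q² A for all q ≥ 2, where C, A > 0. Then there exist constants c > 0 and C' (depending only on C) such that E[exp(c A^{-1/2} |F|^{1/2})] ≤ C'. -/

import Mathlib

open MeasureTheory Nat

private lemma pow_le_fact_mul_exp {x : ℝ} (hx : 0 ≤ x) (n : ℕ) :
    x ^ n ≤ (n ! : ℝ) * Real.exp x := by
  have h := Real.pow_div_factorial_le_exp _ hx n
  have hf : (0 : ℝ) < (n ! : ℝ) := by positivity
  calc x ^ n = x ^ n / (n ! : ℝ) * (n ! : ℝ) := by field_simp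
  _ ≤ Real.exp x * (n ! : ℝ) := mul_le_mul_of_nonneg_right h hf.le
  _ = (n ! : ℝ) * Real.exp x := mul_comm _ _

private lemma nat_pow_le_fact_mul_exp_pow (n : ℕ) :
    (n : ℝ) ^ n ≤ (n ! : ℝ) * Real.exp 1 ^ n := by
  have h := pow_le_fact_mul_exp (Nat.cast_nonneg n : (0:ℝ) ≤ n) n
  have h2 : Real.exp (n : ℝ) = Real.exp 1 ^ n := by
    rw [← Real.exp_nat_mul, mul_one]
  rwa [h2] at h

/-- If `‖F‖_{L^q(μ)} ≤ C q² A` for all `q ≥ 2`, then `E[exp (c A^{-1/2} |F|^{1/2})] ≤ C'`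
for constants `c > 0` and `C'` depending only on `C`. -/
theorem stmt_15 {Ω : Type*} [MeasurableSpace Ω] (C : ℝ) (hC : 0 < C) :
    ∃ c : ℝ, 0 < c ∧ ∃ C' : ℝ,
      ∀ (μ : Measure Ω), IsProbabilityMeasure μ →
      ∀ (F : Ω → ℝ) (A : ℝ), 0 < A →
      (∀ q : ℝ, 2 ≤ q → (∫ ω, |F ω| ^ q ∂μ) ^ (1/q) ≤ C * q ^ 2 * A) →
      ∫ ω, Real.exp (c * A ^ (-(1:ℝ)/2) * |F ω| ^ ((1:ℝ)/2)) ∂μ ≤ C' := by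
  set e : ℝ := Real.exp 1 with he
  have he1 : 1 ≤ e := Real.one_le_exp zero_le_one
  set s : ℝ := Real.sqrt C with hs
  have hs0 : 0 ≤ s := Real.sqrt_nonneg _
  have hpos : (0:ℝ) < 2 * (e * s + 1) := by nlinarith
  set c : ℝ := (2 * (e * s + 1))⁻¹ with hc_def
  have hc : 0 < c := inv_pos.mpr hpos
  have h1 : c * (2 * (e * s + 1)) = 1 := inv_mul_cancel₀ hpos.ne'
  have hes0 : 0 ≤ c * (e * s) := mul_nonneg hc.le (mul_nonneg (by linarith) hs0)
  have hc_half : c ≤ 1 / 2 := by nlinarith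
  have hces : c * e * s ≤ 1 / 2 := by nlinarith
  set M : ℝ := 2 + 16 * C ^ 2 with hM
  have hM1 : 1 ≤ M := by nlinarith
  refine ⟨c, hc, M * 2, ?_⟩
  intro μ hμ F A hA hmom
  -- the rescaled function
  set H : Ω → ℝ := fun ω => |F ω| / A with hH
  have hH0 : ∀ ω, 0 ≤ H ω := fun ω => div_nonneg (abs_nonneg _) hA.le
  set g : Ω → ℝ := fun ω => c * Real.sqrt (H ω) with hg
  have hg0 : ∀ ω, 0 ≤ g ω := fun ω => mul_nonneg hc.le (Real.sqrt_nonneg _)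
  -- rewrite the integrand
  have hrw : ∀ ω, c * A ^ (-(1:ℝ)/2) * |F ω| ^ ((1:ℝ)/2) = g ω := by
    intro ω
    have h1 : A ^ (-(1:ℝ)/2) = (Real.sqrt A)⁻¹ := by
      rw [neg_div, Real.rpow_neg hA.le, ← Real.sqrt_eq_rpow]
    have h2 : |F ω| ^ ((1:ℝ)/2) = Real.sqrt |F ω| := (Real.sqrt_eq_rpow _).symm
    rw [h1, h2]
    show _ = c * Real.sqrt (|F ω| / A)
    rw [Real.sqrt_div (abs_nonneg _)]
    ring
  simp only [hrw]
  by_cases hInt : Integrable (fun ω => Real.exp (g ω)) μ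
  swap
  · rw [integral_undef hInt]; nlinarith
  -- measurability
  have hgm : AEStronglyMeasurable g μ := by
    have h : AEMeasurable (fun ω => Real.log (Real.exp (g ω))) μ :=
      Real.measurable_log.comp_aemeasurable hInt.aestronglyMeasurable.aemeasurable
    simp only [Real.log_exp] at h
    exact h.aestronglyMeasurable
  -- the series terms
  set f : ℕ → Ω → ℝ := fun n ω => g ω ^ n / n ! with hf
  have hf0 : ∀ n ω, 0 ≤ f n ω := fun n ω => by
    apply div_nonneg (pow_nonneg (hg0 ω) n) (by positivity)
  have hfle : ∀ n ω, f n ω ≤ Real.exp (g ω) := fun n ω =>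
    Real.pow_div_factorial_le_exp _ (hg0 ω) n
  have hfm : ∀ n, AEStronglyMeasurable (f n) μ := fun n =>
    ((hgm.aemeasurable.pow_const n).div_const _).aestronglyMeasurable
  have hfint : ∀ n, Integrable (f n) μ := fun n =>
    hInt.mono' (hfm n) (ae_of_all _ fun ω => by
      rw [Real.norm_of_nonneg (hf0 n ω)]; exact hfle n ω)
  -- pointwise series expansion
  have hexp : ∀ ω, Real.exp (g ω) = ∑' n, f n ω := by
    intro ω
    rw [Real.exp_eq_exp_ℝ, NormedSpace.exp_eq_tsum ℝ]
    refine tsum_congr fun n => ?_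
    show ((n ! : ℝ))⁻¹ • g ω ^ n = g ω ^ n / (n ! : ℝ)
    rw [smul_eq_mul, div_eq_mul_inv, mul_comm]
  -- powers of g in terms of rpow of H
  have hpow : ∀ (n : ℕ) ω, g ω ^ n = c ^ n * H ω ^ ((n : ℝ) / 2) := by
    intro n ω
    show (c * Real.sqrt (H ω)) ^ n = _
    rw [mul_pow]
    congr 1
    rw [← Real.rpow_natCast (Real.sqrt (H ω)) n, Real.sqrt_eq_rpow,
      ← Real.rpow_mul (hH0 ω)]
    congr 1
    ring
  -- integrability of the rpow moments
  have hint' : ∀ n : ℕ, Integrable (fun ω => H ω ^ ((n : ℝ) / 2)) μ := by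
    intro n
    have h := (hfint n).const_mul ((n ! : ℝ) / c ^ n)
    refine h.congr (ae_of_all _ fun ω => ?_)
    show (n ! : ℝ) / c ^ n * (g ω ^ n / n !) = _
    rw [hpow n ω]
    have hc0 : c ^ n ≠ 0 := pow_ne_zero n hc.ne'
    have hfa : (n ! : ℝ) ≠ 0 := by positivity
    field_simp
  -- moment bounds from the hypothesis
  have hHq : ∀ q : ℝ, 2 ≤ q → ∫ ω, H ω ^ q ∂μ ≤ (C * q ^ 2) ^ q := by
    intro q hq
    have hq0 : (0:ℝ) < q := by linarith
    have hFH : ∀ ω, |F ω| ^ q = A ^ q * H ω ^ q := by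
      intro ω
      have habs : |F ω| = A * H ω := by
        show |F ω| = A * (|F ω| / A)
        field_simp
      rw [habs, Real.mul_rpow hA.le (hH0 ω)]
    have hI0 : 0 ≤ ∫ ω, H ω ^ q ∂μ :=
      integral_nonneg fun ω => Real.rpow_nonneg (hH0 ω) q
    set I : ℝ := ∫ ω, H ω ^ q ∂μ with hI
    have h1 : ∫ ω, |F ω| ^ q ∂μ = A ^ q * I := by
      rw [hI]
      simp_rw [hFH]
      exact integral_const_mul _ _
    have h2 := hmom q hq
    rw [h1] at h2
    have h3 : (A ^ q * I) ^ (1/q) = A * I ^ (1/q) := by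
      rw [Real.mul_rpow (Real.rpow_nonneg hA.le q) hI0, ← Real.rpow_mul hA.le,
        mul_one_div_cancel hq0.ne', Real.rpow_one]
    rw [h3] at h2
    have h4 : I ^ (1/q) ≤ C * q ^ 2 := by
      have h5 : I ^ (1/q) * A ≤ C * q ^ 2 * A := by linarith [h2]
      exact (mul_le_mul_iff_of_pos_right hA).mp h5
    calc I = (I ^ (1/q)) ^ q := by
            rw [← Real.rpow_mul hI0, one_div_mul_cancel hq0.ne', Real.rpow_one]
    _ ≤ (C * q ^ 2) ^ q :=
        Real.rpow_le_rpow (Real.rpow_nonneg hI0 _) h4 hq0.le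
  -- the integral of each term
  have hi : ∀ n : ℕ, ∫ ω, f n ω ∂μ = c ^ n / n ! * ∫ ω, H ω ^ ((n : ℝ) / 2) ∂μ := by
    intro n
    have hfn : ∀ ω, f n ω = (c ^ n / n !) * H ω ^ ((n : ℝ) / 2) := by
      intro ω
      show g ω ^ n / n ! = _
      rw [hpow n ω]; ring
    simp_rw [hfn]
    exact integral_const_mul _ _
  -- integrability of H^2
  have hint2 : Integrable (fun ω => H ω ^ (2:ℝ)) μ := by
    have h := hint' 4
    have h4 : ((4:ℕ) : ℝ) / 2 = (2:ℝ) := by norm_num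
    rwa [h4] at h
  have hH2 : ∫ ω, H ω ^ (2:ℝ) ∂μ ≤ 16 * C ^ 2 := by
    have h := hHq 2 le_rfl
    have h6 : (C * (2:ℝ) ^ 2) ^ (2:ℝ) = 16 * C ^ 2 := by
      rw [Real.rpow_two]; ring
    rw [h6] at h
    exact h
  -- the term bounds
  have hb : ∀ n : ℕ, ∫ ω, f n ω ∂μ ≤ M * (1/2) ^ n := by
    intro n
    rw [hi n]
    have hI0 : 0 ≤ ∫ ω, H ω ^ ((n : ℝ) / 2) ∂μ :=
      integral_nonneg fun ω => Real.rpow_nonneg (hH0 ω) _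
    rcases lt_or_ge n 4 with hn | hn
    · -- small n : use the second moment
      have hle : ∀ ω, H ω ^ ((n : ℝ) / 2) ≤ 1 + H ω ^ (2:ℝ) := by
        intro ω
        have hr0 : (0:ℝ) ≤ (n : ℝ) / 2 := by positivity
        have hr2 : (n : ℝ) / 2 ≤ 2 := by
          have : (n : ℝ) ≤ 4 := by exact_mod_cast hn.le
          linarith
        rcases le_total (H ω) 1 with hx | hx
        · have hle1 := Real.rpow_le_one (hH0 ω) hx hr0
          have h2 : 0 ≤ H ω ^ (2:ℝ) := Real.rpow_nonneg (hH0 ω) _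
          linarith
        · have hle1 := Real.rpow_le_rpow_of_exponent_le hx hr2
          linarith
      have hmono : ∫ ω, H ω ^ ((n : ℝ) / 2) ∂μ ≤ ∫ ω, (1 + H ω ^ (2:ℝ)) ∂μ :=
        integral_mono (hint' n) ((integrable_const 1).add hint2) hle
      have hsum : ∫ ω, (1 + H ω ^ (2:ℝ)) ∂μ = 1 + ∫ ω, H ω ^ (2:ℝ) ∂μ := by
        rw [integral_add (integrable_const 1) hint2, integral_const]
        simp
      have hIb : ∫ ω, H ω ^ ((n : ℝ) / 2) ∂μ ≤ 1 + 16 * C ^ 2 := by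
        rw [hsum] at hmono; linarith
      have hcn : c ^ n / n ! ≤ (1/2) ^ n := by
        have hp1 : c ^ n ≤ (1/2) ^ n := pow_le_pow_left₀ hc.le hc_half n
        have hp2 : (1:ℝ) ≤ n ! := by exact_mod_cast Nat.one_le_iff_ne_zero.mpr n.factorial_ne_zero
        calc c ^ n / n ! ≤ c ^ n := div_le_self (pow_nonneg hc.le n) hp2
        _ ≤ (1/2) ^ n := hp1
      calc c ^ n / n ! * ∫ ω, H ω ^ ((n : ℝ) / 2) ∂μ
          ≤ (1/2) ^ n * (1 + 16 * C ^ 2) :=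
            mul_le_mul hcn hIb hI0 (by positivity)
      _ ≤ M * (1/2) ^ n := by
            rw [mul_comm]
            apply mul_le_mul_of_nonneg_right (by nlinarith) (by positivity)
    · -- large n : use the moment hypothesis
      set q : ℝ := (n : ℝ) / 2 with hq_def
      have hq2 : (2:ℝ) ≤ q := by
        rw [hq_def]
        have h4n : (4:ℝ) ≤ (n : ℝ) := by exact_mod_cast hn
        linarith
      have hq0 : (0:ℝ) ≤ q := by linarith
      have hIb := hHq q hq2
      -- (C q²)^q = (s q)^n
      have hkey : (C * q ^ 2) ^ q = (s * q) ^ n := by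
        have hCq : C * q ^ 2 = (s * q) ^ 2 := by
          rw [mul_pow, hs, Real.sq_sqrt hC.le]
        rw [hCq, ← Real.rpow_natCast (s * q) 2, ← Real.rpow_mul (by positivity),
          show ((2:ℕ):ℝ) * q = ((n:ℕ):ℝ) by rw [hq_def]; push_cast; ring,
          Real.rpow_natCast]
      rw [hkey] at hIb
      have hfac : (0:ℝ) < (n ! : ℝ) := by positivity
      calc c ^ n / n ! * ∫ ω, H ω ^ q ∂μ
          ≤ c ^ n / n ! * (s * q) ^ n := by
            exact mul_le_mul_of_nonneg_left hIb (by positivity)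
      _ = (c * s / 2) ^ n * (n : ℝ) ^ n / n ! := by
            rw [div_mul_eq_mul_div, ← mul_pow, ← mul_pow]
            congr 2
            rw [hq_def]; ring
      _ ≤ (c * s / 2) ^ n * ((n ! : ℝ) * e ^ n) / n ! := by
            apply (div_le_div_iff_of_pos_right hfac).mpr
            exact mul_le_mul_of_nonneg_left (nat_pow_le_fact_mul_exp_pow n) (by positivity)
      _ = (c * s / 2 * e) ^ n := by
            rw [mul_pow (c * s / 2) e]
            field_simp
      _ ≤ (1/2) ^ n := by
            apply pow_le_pow_left₀ (by positivity)
            nlinarith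
      _ ≤ M * (1/2) ^ n :=
            le_mul_of_one_le_left (by positivity) hM1
  -- summability
  have hsummb : Summable (fun n : ℕ => M * (1/2:ℝ) ^ n) :=
    (summable_geometric_of_lt_one (by norm_num) (by norm_num)).mul_left M
  have hsumf : Summable (fun n : ℕ => ∫ ω, f n ω ∂μ) :=
    Summable.of_nonneg_of_le (fun n => integral_nonneg (hf0 n)) hb hsummb
  have hnorm : Summable (fun n : ℕ => ∫ ω, ‖f n ω‖ ∂μ) := by
    have h : (fun n : ℕ => ∫ ω, ‖f n ω‖ ∂μ) = fun n : ℕ => ∫ ω, f n ω ∂μ :=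
      funext fun n => integral_congr_ae (ae_of_all _ fun ω => Real.norm_of_nonneg (hf0 n ω))
    rw [h]; exact hsumf
  have hexch : ∫ ω, Real.exp (g ω) ∂μ = ∑' n, ∫ ω, f n ω ∂μ := by
    simp_rw [hexp]
    exact (integral_tsum_of_summable_integral_norm hfint hnorm).symm
  rw [hexch]
  calc ∑' n, ∫ ω, f n ω ∂μ ≤ ∑' n : ℕ, M * (1/2:ℝ) ^ n :=
        Summable.tsum_le_tsum hb hsumf hsummb
  _ = M * 2 := by
        rw [tsum_mul_left, tsum_geometric_of_lt_one (by norm_num) (by norm_num)]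
        norm_num
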